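/- Let G be a (discrete) group in which every conjugacy class {g x g⁻¹ : g ∈ G} is finite. Then G is amenable: there exists a left-invariant mean on ℓ∞(G). -/

import Mathlib

open Filter Topology
set_option synthInstance.maxHeartbeats 1000000
set_option maxHeartbeats 1000000

noncomputable section
namespace S10

variable {G : Type*} [Group G]

/-- positive unital functional -/
def PU {G : Type*} (m : lp (fun _ : G => ℝ) ⊤ →ₗ[ℝ] ℝ) : Prop :=
  (∀ f, (∀ y, 0 ≤ f y) → 0 ≤ m f) ∧ (∀ f, (∀ y, f y = 1) → m f = 1)

/-- invariance under left translation by x -/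
def InvUnder {G : Type*} [Group G] (m : lp (fun _ : G => ℝ) ⊤ →ₗ[ℝ] ℝ) (x : G) : Prop :=
  ∀ f g : lp (fun _ : G => ℝ) ⊤, (∀ y, g y = f (x * y)) → m g = m f

lemma memℓp_comp {G δ : Type*} (f : lp (fun _ : G => ℝ) ⊤) (τ : δ → G) :
    Memℓp (fun y => f (τ y)) (⊤ : ENNReal) := by
  obtain ⟨C, hC⟩ := memℓp_infty_iff.1 (lp.memℓp f)
  exact memℓp_infty ⟨C, by rintro r ⟨y, rfl⟩; exact hC ⟨τ y, rfl⟩⟩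

/-- composition with a map as a linear map between ℓ∞ spaces -/
def compLM {G δ : Type*} (τ : δ → G) :
    lp (fun _ : G => ℝ) ⊤ →ₗ[ℝ] lp (fun _ : δ => ℝ) ⊤ where
  toFun f := ⟨fun y => f (τ y), memℓp_comp f τ⟩
  map_add' f g := by
    apply lp.ext; funext y
    simp [lp.coeFn_add, Pi.add_apply]
    rfl
  map_smul' c f := by
    apply lp.ext; funext y
    simp [lp.coeFn_smul, Pi.smul_apply]

@[simp] lemma compLM_apply {G δ : Type*} (τ : δ → G) (f : lp (fun _ : G => ℝ) ⊤) (y : δ) :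
    compLM τ f y = f (τ y) := rfl

/-- evaluation at a point -/
def evalLM {G : Type*} (a : G) : lp (fun _ : G => ℝ) ⊤ →ₗ[ℝ] ℝ where
  toFun f := f a
  map_add' f g := by simp [lp.coeFn_add, Pi.add_apply]
  map_smul' c f := by simp [lp.coeFn_smul]

@[simp] lemma evalLM_apply {G : Type*} (a : G) (f : lp (fun _ : G => ℝ) ⊤) :
    evalLM a f = f a := rfl

/-- the constant function 1 -/
def lpone (G : Type*) : lp (fun _ : G => ℝ) ⊤ :=
  ⟨fun _ => 1, memℓp_infty ⟨1, by rintro r ⟨y, rfl⟩; simp⟩⟩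

@[simp] lemma lpone_apply {G : Type*} (y : G) : lpone G y = 1 := rfl

lemma pu_bound {G : Type*} {m : lp (fun _ : G => ℝ) ⊤ →ₗ[ℝ] ℝ} (hm : PU m)
    (f : lp (fun _ : G => ℝ) ⊤) : m f ∈ Set.Icc (-‖f‖) ‖f‖ := by
  have h1 : m (lpone G) = 1 := hm.2 _ (fun y => rfl)
  have hb : ∀ y : G, |f y| ≤ ‖f‖ := by
    intro y
    simpa [Real.norm_eq_abs] using lp.norm_apply_le_norm (ENNReal.top_ne_zero) f y
  constructor
  · have h0 : 0 ≤ m (f + ‖f‖ • lpone G) := by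
      apply hm.1
      intro y
      have := (abs_le.1 (hb y)).1
      simp only [lp.coeFn_add, lp.coeFn_smul, Pi.add_apply, Pi.smul_apply, lpone_apply,
        smul_eq_mul, mul_one]
      linarith
    rw [map_add, map_smul, h1, smul_eq_mul, mul_one] at h0
    linarith
  · have h0 : 0 ≤ m (‖f‖ • lpone G - f) := by
      apply hm.1
      intro y
      have := (abs_le.1 (hb y)).2
      simp only [lp.coeFn_sub, lp.coeFn_smul, Pi.sub_apply, Pi.smul_apply, lpone_apply,
        smul_eq_mul, mul_one]
      linarith
    rw [map_sub, map_smul, h1, smul_eq_mul, mul_one] at h0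
    linarith


lemma exists_ultralim {ι : Type*} (U : Ultrafilter ι) (g : ι → ℝ) (C : ℝ)
    (h : ∀ i, g i ∈ Set.Icc (-C) C) : ∃ L, Tendsto g (U : Filter ι) (𝓝 L) := by
  obtain ⟨L, _, hL⟩ := (isCompact_Icc (a := -C) (b := C)).ultrafilter_le_nhds (U.map g)
    (le_principal_iff.2 (by
      have : Set.Icc (-C) C ∈ U.map g := by
        refine Filter.mem_map.2 ?_
        have : (g ⁻¹' Set.Icc (-C) C) = Set.univ := by
          ext i; simp [h i]
        rw [this]; exact Filter.univ_mem
      exact this))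
  exact ⟨L, hL⟩

/-- Ultralimit of a family of positive unital functionals. -/
lemma exists_ultra_mean {G ι : Type*} (U : Ultrafilter ι)
    (ms : ι → (lp (fun _ : G => ℝ) ⊤ →ₗ[ℝ] ℝ)) (hms : ∀ i, PU (ms i)) :
    ∃ M : lp (fun _ : G => ℝ) ⊤ →ₗ[ℝ] ℝ, PU M ∧
      ∀ f, Tendsto (fun i => ms i f) (U : Filter ι) (𝓝 (M f)) := by
  have key : ∀ f : lp (fun _ : G => ℝ) ⊤, ∃ L, Tendsto (fun i => ms i f) (U : Filter ι) (𝓝 L) :=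
    fun f => exists_ultralim U _ ‖f‖ (fun i => pu_bound (hms i) f)
  choose φ hφ using key
  refine ⟨{ toFun := φ, map_add' := ?_, map_smul' := ?_}, ⟨?_, ?_⟩, ?_⟩
  · intro f g
    refine tendsto_nhds_unique (hφ (f + g)) ?_
    have : (fun i => ms i (f + g)) = fun i => ms i f + ms i g := by
      funext i; simp [map_add]
    rw [this]
    exact (hφ f).add (hφ g)
  · intro c f
    refine tendsto_nhds_unique (hφ (c • f)) ?_
    have : (fun i => ms i (c • f)) = fun i => c * ms i f := by
      funext i; simp [map_smul]
    rw [this]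
    exact (hφ f).const_mul c
  · intro f hf
    exact ge_of_tendsto' (hφ f) (fun i => (hms i).1 f hf)
  · intro f hf
    refine tendsto_nhds_unique (hφ f) ?_
    have : (fun i => ms i f) = fun _ => (1 : ℝ) := by
      funext i; exact (hms i).2 f hf
    rw [this]
    exact tendsto_const_nhds
  · exact hφ

/-- If for every finite subset there is a positive unital functional invariant under
its elements, then there is one invariant under everything. -/
lemma exists_mean_of_finsets {G : Type*} [Group G]
    (h : ∀ F : Finset G, ∃ m, PU m ∧ ∀ x ∈ F, InvUnder m x) :
    ∃ m, PU m ∧ ∀ x : G, InvUnder m x := by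
  classical
  choose ms hPU hInv using h
  let U : Ultrafilter (Finset G) := Ultrafilter.of atTop
  have hU : (U : Filter (Finset G)) ≤ atTop := Ultrafilter.of_le _
  obtain ⟨M, hM, htends⟩ := exists_ultra_mean U ms hPU
  refine ⟨M, hM, ?_⟩
  intro x f g hg
  have hmem : {F : Finset G | x ∈ F} ∈ (U : Filter (Finset G)) := by
    apply hU
    refine mem_of_superset (Filter.mem_atTop ({x} : Finset G)) ?_
    intro F hF
    exact Finset.singleton_subset_iff.1 hF
  have : Tendsto (fun F => ms F g) (U : Filter (Finset G)) (𝓝 (M f)) := by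
    refine (htends f).congr' ?_
    filter_upwards [hmem] with F hF
    exact (hInv F x hF f g hg).symm
  exact tendsto_nhds_unique (htends g) this


section Comm

/-- coordinate-shift equivalence -/
def updEquiv {ι : Type*} [DecidableEq ι] {n : ℕ} (i₀ : ι) :
    (ι → Fin (n+1)) ≃ (ι → Fin (n+1)) where
  toFun k := Function.update k i₀ (k i₀ + 1)
  invFun k := Function.update k i₀ (k i₀ - 1)
  left_inv k := by
    funext j
    rcases eq_or_ne j i₀ with rfl | h
    · simp
    · simp [Function.update_of_ne h]
  right_inv k := by
    funext j
    rcases eq_or_ne j i₀ with rfl | h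
    · simp
    · simp [Function.update_of_ne h]

lemma card_fix_mul_le {ι : Type*} [Fintype ι] [DecidableEq ι] {n : ℕ} (i₀ : ι) (c : Fin (n+1)) :
    (Finset.univ.filter (fun k : ι → Fin (n+1) => k i₀ = c)).card * (n+1)
      ≤ Fintype.card (ι → Fin (n+1)) := by
  classical
  set S := Finset.univ.filter (fun k : ι → Fin (n+1) => k i₀ = c) with hS
  have h1 : S.card * (n+1) = (S ×ˢ (Finset.univ : Finset (Fin (n+1)))).card := by
    rw [Finset.card_product, Finset.card_univ, Fintype.card_fin]
  rw [h1, ← Finset.card_univ (α := ι → Fin (n+1))]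
  apply Finset.card_le_card_of_injOn (fun p => Function.update p.1 i₀ p.2)
  · intro p _; exact Finset.mem_univ _
  · intro p hp q hq hpq
    simp only [Finset.coe_product, Set.mem_prod, Finset.mem_coe, hS, Finset.mem_filter] at hp hq
    have h2 : p.2 = q.2 := by
      have := congrFun hpq i₀
      simpa using this
    have h1 : p.1 = q.1 := by
      funext j
      rcases eq_or_ne j i₀ with rfl | h
      · rw [hp.1.2, hq.1.2]
      · have := congrFun hpq j
        simpa [Function.update_of_ne h] using this
    exact Prod.ext h1 h2

variable {A : Type*} [CommGroup A]

lemma comm_finset_mean (F : Finset A) :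
    ∃ m : lp (fun _ : A => ℝ) ⊤ →ₗ[ℝ] ℝ, PU m ∧ ∀ x ∈ F, InvUnder m x := by
  classical
  let ι := {a : A // a ∈ F}
  let P : (N : ℕ) → (ι → Fin (N+1)) → A := fun N k => ∏ i : ι, (i : A) ^ ((k i : ℕ))
  let c : ℕ → ℝ := fun N => (Fintype.card (ι → Fin (N+1)) : ℝ)
  have hc : ∀ N, 0 < c N := fun N => Nat.cast_pos.2 Fintype.card_pos
  let ms : ℕ → (lp (fun _ : A => ℝ) ⊤ →ₗ[ℝ] ℝ) := fun N =>
    (c N)⁻¹ • ∑ k : ι → Fin (N+1), evalLM (P N k)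
  have hms_apply : ∀ N f, ms N f = (c N)⁻¹ * ∑ k : ι → Fin (N+1), f (P N k) := by
    intro N f
    simp [ms, LinearMap.smul_apply, LinearMap.sum_apply, evalLM_apply, smul_eq_mul]
  have hms : ∀ N, PU (ms N) := by
    intro N
    constructor
    · intro f hf
      rw [hms_apply]
      apply mul_nonneg (inv_nonneg.2 (hc N).le)
      exact Finset.sum_nonneg fun k _ => hf _
    · intro f hf
      rw [hms_apply]
      have : ∀ k ∈ (Finset.univ : Finset (ι → Fin (N+1))), f (P N k) = 1 := fun k _ => hf _
      rw [Finset.sum_congr rfl this, Finset.sum_const, Finset.card_univ, nsmul_eq_mul, mul_one]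
      exact inv_mul_cancel₀ (hc N).ne'
  obtain ⟨M, hM, htends⟩ := exists_ultra_mean (hyperfilter ℕ) ms hms
  refine ⟨M, hM, ?_⟩
  intro a ha f g hg
  -- key estimate
  have key : ∀ N : ℕ, |ms N g - ms N f| ≤ (2 * ‖f‖) / (N+1) := by
    intro N
    set i₀ : ι := ⟨a, ha⟩ with hi₀
    have hfb : ∀ y : A, |f y| ≤ ‖f‖ := fun y => by
      simpa [Real.norm_eq_abs] using lp.norm_apply_le_norm (ENNReal.top_ne_zero) f y
    -- rewrite the difference
    have e2 : ∑ k : ι → Fin (N+1), f (P N k)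
        = ∑ k : ι → Fin (N+1), f (P N (updEquiv i₀ k)) :=
      (Equiv.sum_comp (updEquiv i₀) (fun k => f (P N k))).symm
    have e1 : ms N g - ms N f
        = (c N)⁻¹ * ∑ k : ι → Fin (N+1), (f (a * P N k) - f (P N (updEquiv i₀ k))) := by
      rw [hms_apply, hms_apply, ← mul_sub]
      congr 1
      rw [e2, ← Finset.sum_sub_distrib]
      apply Finset.sum_congr rfl
      intro k _
      rw [hg]
    -- pointwise identity off the wrap-around set
    have hpoint : ∀ k : ι → Fin (N+1), k i₀ ≠ Fin.last N →
        a * P N k = P N (updEquiv i₀ k) := by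
      intro k hk
      have hval : (((k i₀ + 1) : Fin (N+1)) : ℕ) = (k i₀ : ℕ) + 1 :=
        Fin.val_add_one_of_lt (Fin.lt_last_iff_ne_last.2 hk)
      have h1 : P N k = (a : A) ^ ((k i₀ : ℕ)) * ∏ i ∈ Finset.univ.erase i₀, (i : A) ^ ((k i : ℕ)) :=
        (Finset.mul_prod_erase Finset.univ (fun i : ι => (i : A) ^ ((k i : ℕ))) (Finset.mem_univ i₀)).symm
      have h2 : P N (updEquiv i₀ k)
          = (a : A) ^ ((k i₀ : ℕ) + 1) * ∏ i ∈ Finset.univ.erase i₀, (i : A) ^ ((k i : ℕ)) := by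
        have h3 : P N (updEquiv i₀ k)
            = (↑i₀ : A) ^ (((Function.update k i₀ (k i₀ + 1)) i₀ : ℕ))
              * ∏ i ∈ Finset.univ.erase i₀, (i : A) ^ (((Function.update k i₀ (k i₀ + 1)) i : ℕ)) :=
          (Finset.mul_prod_erase Finset.univ
            (fun i : ι => (i : A) ^ (((Function.update k i₀ (k i₀ + 1)) i : ℕ)))
            (Finset.mem_univ i₀)).symm
        rw [h3]
        congr 1
        · rw [Function.update_self, hval]
        · apply Finset.prod_congr rfl
          intro j hj
          rw [Function.update_of_ne (Finset.ne_of_mem_erase hj)]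
      rw [h1, h2, ← mul_assoc, ← pow_succ']
    set S := Finset.univ.filter (fun k : ι → Fin (N+1) => k i₀ = Fin.last N) with hSdef
    have hbound : |∑ k : ι → Fin (N+1), (f (a * P N k) - f (P N (updEquiv i₀ k)))|
        ≤ (S.card : ℝ) * (2 * ‖f‖) := by
      calc |∑ k : ι → Fin (N+1), (f (a * P N k) - f (P N (updEquiv i₀ k)))|
          ≤ ∑ k : ι → Fin (N+1), |f (a * P N k) - f (P N (updEquiv i₀ k))| :=
            Finset.abs_sum_le_sum_abs _ _
        _ ≤ ∑ k : ι → Fin (N+1), (if k i₀ = Fin.last N then 2 * ‖f‖ else 0) := by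
            apply Finset.sum_le_sum
            intro k _
            by_cases hk : k i₀ = Fin.last N
            · rw [if_pos hk]
              calc |f (a * P N k) - f (P N (updEquiv i₀ k))|
                  ≤ |f (a * P N k)| + |f (P N (updEquiv i₀ k))| := abs_sub _ _
                _ ≤ ‖f‖ + ‖f‖ := add_le_add (hfb _) (hfb _)
                _ = 2 * ‖f‖ := by ring
            · rw [if_neg hk, hpoint k hk]
              simp
        _ = (S.card : ℝ) * (2 * ‖f‖) := by
            rw [Finset.sum_ite, Finset.sum_const, Finset.sum_const_zero, add_zero,
              nsmul_eq_mul]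
    have hcardle : (S.card : ℝ) * (N+1) ≤ c N := by
      have h2 : (S.card * (N+1) : ℕ) ≤ Fintype.card (ι → Fin (N+1)) := card_fix_mul_le i₀ (Fin.last N)
      calc (S.card : ℝ) * (N+1) = ((S.card * (N+1) : ℕ) : ℝ) := by push_cast; ring
        _ ≤ c N := Nat.cast_le.2 h2
    rw [e1, abs_mul, abs_of_nonneg (inv_nonneg.2 (hc N).le)]
    calc (c N)⁻¹ * |∑ k : ι → Fin (N+1), (f (a * P N k) - f (P N (updEquiv i₀ k)))|
        ≤ (c N)⁻¹ * ((S.card : ℝ) * (2 * ‖f‖)) := by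
          apply mul_le_mul_of_nonneg_left hbound (inv_nonneg.2 (hc N).le)
      _ ≤ (2 * ‖f‖) / (N+1) := by
          rw [div_eq_mul_inv]
          have hN : (0:ℝ) < (N:ℝ)+1 := by positivity
          have hSc : (S.card : ℝ) ≤ c N * ((N:ℝ)+1)⁻¹ := by
            rw [← le_div_iff₀ hN] at hcardle
            simpa [div_eq_mul_inv] using hcardle
          calc (c N)⁻¹ * ((S.card : ℝ) * (2 * ‖f‖))
              ≤ (c N)⁻¹ * ((c N * ((N:ℝ)+1)⁻¹) * (2 * ‖f‖)) := by
                apply mul_le_mul_of_nonneg_left _ (inv_nonneg.2 (hc N).le)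
                apply mul_le_mul_of_nonneg_right hSc (by positivity)
            _ = ((c N)⁻¹ * c N) * (((N:ℝ)+1)⁻¹ * (2 * ‖f‖)) := by ring
            _ = (2 * ‖f‖) * ((N:ℝ)+1)⁻¹ := by
                rw [inv_mul_cancel₀ (hc N).ne', one_mul]
                ring
  -- conclude via the ultrafilter limit
  have hz : Tendsto (fun N : ℕ => ms N g - ms N f) ((hyperfilter ℕ) : Filter ℕ) (𝓝 0) := by
    have h1 : Tendsto (fun N : ℕ => (2 * ‖f‖) / (N+1)) atTop (𝓝 0) := by
      have h' := (tendsto_const_div_atTop_nhds_zero_nat (2 * ‖f‖)).comp (tendsto_add_atTop_nat 1)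
      have h'' : ((fun n : ℕ => 2 * ‖f‖ / (n:ℝ)) ∘ fun a => a + 1)
          = fun N : ℕ => 2 * ‖f‖ / ((N:ℝ)+1) := by
        funext N; simp [Function.comp]
      rwa [h''] at h'
    have h2 : Tendsto (fun N : ℕ => (2 * ‖f‖) / (N+1)) ((hyperfilter ℕ) : Filter ℕ) (𝓝 0) :=
      h1.mono_left (by rw [← Nat.cofinite_eq_atTop]; exact Filter.hyperfilter_le_cofinite)
    apply squeeze_zero_norm _ h2
    intro N
    simpa [Real.norm_eq_abs] using key N
  have := tendsto_nhds_unique ((htends g).sub (htends f)) hz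
  linarith [this]

end Comm


/-- Pushing a mean up from a finite-index subgroup by averaging over cosets. -/
lemma mean_of_finiteIndex {G : Type*} [Group G] (H : Subgroup G) [H.FiniteIndex]
    (mH : lp (fun _ : ↥H => ℝ) ⊤ →ₗ[ℝ] ℝ) (hPU : PU mH) (hInv : ∀ h : ↥H, InvUnder mH h) :
    ∃ m : lp (fun _ : G => ℝ) ⊤ →ₗ[ℝ] ℝ, PU m ∧ ∀ x : G, InvUnder m x := by
  classical
  haveI : Finite (G ⧸ H) := H.finite_quotient_of_finiteIndex
  haveI : Fintype (G ⧸ H) := Fintype.ofFinite _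
  set c : ℝ := (Fintype.card (G ⧸ H) : ℝ) with hcdef
  have hc : 0 < c := Nat.cast_pos.2 Fintype.card_pos
  set m : lp (fun _ : G => ℝ) ⊤ →ₗ[ℝ] ℝ :=
    c⁻¹ • ∑ q : G ⧸ H, mH ∘ₗ compLM (fun z : ↥H => q.out * (z : G)) with hmdef
  have hm_apply : ∀ f, m f = c⁻¹ * ∑ q : G ⧸ H, mH (compLM (fun z : ↥H => q.out * (z : G)) f) := by
    intro f
    simp [hmdef, LinearMap.smul_apply, LinearMap.sum_apply, smul_eq_mul]
  refine ⟨m, ⟨?_, ?_⟩, ?_⟩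
  · intro f hf
    rw [hm_apply]
    exact mul_nonneg (inv_nonneg.2 hc.le)
      (Finset.sum_nonneg fun q _ => hPU.1 _ (fun z => hf _))
  · intro f hf
    rw [hm_apply]
    have h1 : ∀ q ∈ (Finset.univ : Finset (G ⧸ H)),
        mH (compLM (fun z : ↥H => q.out * (z : G)) f) = 1 :=
      fun q _ => hPU.2 _ (fun z => hf _)
    rw [Finset.sum_congr rfl h1, Finset.sum_const, Finset.card_univ, nsmul_eq_mul, mul_one]
    exact inv_mul_cancel₀ hc.ne'
  · intro x f g hg
    rw [hm_apply, hm_apply]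
    congr 1
    have e : ∀ q : G ⧸ H, mH (compLM (fun z : ↥H => q.out * (z : G)) g)
        = mH (compLM (fun z : ↥H => (x • q).out * (z : G)) f) := by
      intro q
      obtain ⟨h, hh⟩ := QuotientGroup.mk_out_eq_mul H (x * q.out)
      have hmk : QuotientGroup.mk (x * q.out) = x • q := by
        rw [← smul_eq_mul]
        exact MulAction.Quotient.mk_smul_out H x q
      rw [hmk] at hh
      -- hh : (x • q).out = (x * q.out) * h
      refine hInv h⁻¹ (compLM (fun z : ↥H => (x • q).out * (z : G)) f)
        (compLM (fun z : ↥H => q.out * (z : G)) g) ?_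
      intro z
      simp only [compLM_apply, Subgroup.coe_mul, Subgroup.coe_inv, hh]
      rw [hg]
      group
    rw [Finset.sum_congr rfl (fun q _ => e q)]
    exact Equiv.sum_comp (MulAction.toPerm x : (G ⧸ H) ≃ (G ⧸ H))
      (fun q : G ⧸ H => mH (compLM (fun z : ↥H => q.out * (z : G)) f))

lemma centralizer_finiteIndex {G : Type*} [Group G]
    (hfc : ∀ x : G, Set.Finite {y : G | ∃ g : G, g * x * g⁻¹ = y}) (a : G) :
    (Subgroup.centralizer ({a} : Set G)).FiniteIndex := by
  rw [Subgroup.centralizer_eq_comap_stabilizer]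
  refine ⟨?_⟩
  refine ne_of_eq_of_ne (Subgroup.index_comap_of_surjective (MulAction.stabilizer (ConjAct G) a) (f := ConjAct.toConjAct.toMonoidHom) ConjAct.toConjAct.surjective) ?_
  rw [MulAction.index_stabilizer]
  have hsub : MulAction.orbit (ConjAct G) a ⊆ {y : G | ∃ g : G, g * a * g⁻¹ = y} := by
    rintro y ⟨g, rfl⟩
    exact ⟨ConjAct.ofConjAct g, (ConjAct.smul_def g a).symm⟩
  have hfin : (MulAction.orbit (ConjAct G) a).Finite := (hfc a).subset hsub
  have hne : (MulAction.orbit (ConjAct G) a).Nonempty := ⟨a, MulAction.mem_orbit_self a⟩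
  exact ((Set.ncard_pos hfin).2 hne).ne'

end S10
end

/-- A (discrete) group in which every conjugacy class is finite is
amenable: there is a left-invariant mean on `ℓ∞(G)` (realized as
`lp (fun _ : G => ℝ) ⊤`, the bounded real-valued functions on `G`). -/
theorem statement10 {G : Type*} [Group G]
    (hfc : ∀ x : G, Set.Finite {y : G | ∃ g : G, g * x * g⁻¹ = y}) :
    ∃ m : lp (fun _ : G => ℝ) ⊤ →ₗ[ℝ] ℝ,
      (∀ f : lp (fun _ : G => ℝ) ⊤, (∀ y, 0 ≤ f y) → 0 ≤ m f) ∧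
      (∀ f : lp (fun _ : G => ℝ) ⊤, (∀ y, f y = 1) → m f = 1) ∧
      (∀ (x : G) (f g : lp (fun _ : G => ℝ) ⊤), (∀ y, g y = f (x * y)) → m g = m f) := by
  classical
  have main : ∃ m, S10.PU m ∧ ∀ x : G, S10.InvUnder m x := by
    apply S10.exists_mean_of_finsets
    intro F
    set H : Subgroup G := Subgroup.closure (F : Set G) with hHdef
    set K : Subgroup G := Subgroup.centralizer (F : Set G) with hKdef
    have hKinf : K = ⨅ a ∈ F, Subgroup.centralizer ({a} : Set G) := by
      ext z
      simp only [hKdef, Subgroup.mem_centralizer_iff, Subgroup.mem_iInf, Set.mem_singleton_iff,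
        forall_eq, Finset.mem_coe]
    haveI hKfi : K.FiniteIndex := by
      rw [hKinf]
      exact Subgroup.finiteIndex_iInf' _ (fun a _ => S10.centralizer_finiteIndex hfc a)
    set K' : Subgroup ↥H := K.subgroupOf H with hK'def
    haveI : K'.FiniteIndex := Subgroup.instFiniteIndex_subgroupOf K H
    have hcomm : ∀ z w : ↥K', z * w = w * z := by
      intro z w
      apply Subtype.ext; apply Subtype.ext
      have hz : ((z : ↥H) : G) ∈ K := Subgroup.mem_subgroupOf.1 z.2
      have hw : ((w : ↥H) : G) ∈ H := (w : ↥H).2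
      have hHle : Subgroup.closure (F : Set G) ≤ Subgroup.centralizer ({((z : ↥H) : G)} : Set G) := by
        apply Subgroup.closure_le _ |>.2
        intro b hb
        rw [SetLike.mem_coe, Subgroup.mem_centralizer_iff]
        intro h hmem
        rw [Set.mem_singleton_iff] at hmem
        subst hmem
        exact (Subgroup.mem_centralizer_iff.1 hz b hb).symm
      have := Subgroup.mem_centralizer_iff.1 (hHle hw) _ (Set.mem_singleton _)
      simpa using this
    letI : CommGroup ↥K' := { (inferInstance : Group ↥K') with mul_comm := hcomm }
    obtain ⟨mA, hPUA, hInvA⟩ :=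
      S10.exists_mean_of_finsets (G := ↥K') (fun Fa => S10.comm_finset_mean Fa)
    obtain ⟨mH, hPUH, hInvH⟩ :=
      S10.mean_of_finiteIndex (G := ↥H) K' mA hPUA (fun h => hInvA h)
    refine ⟨mH ∘ₗ S10.compLM (fun z : ↥H => (z : G)), ⟨?_, ?_⟩, ?_⟩
    · intro f hf
      exact hPUH.1 _ (fun z => hf _)
    · intro f hf
      exact hPUH.2 _ (fun z => hf _)
    · intro x hx f g hg
      have hxH : x ∈ H := Subgroup.subset_closure hx
      simp only [LinearMap.comp_apply]
      refine hInvH ⟨x, hxH⟩ (S10.compLM (fun z : ↥H => (z : G)) f)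
        (S10.compLM (fun z : ↥H => (z : G)) g) ?_
      intro z
      simp only [S10.compLM_apply, Subgroup.coe_mul]
      exact hg _
  obtain ⟨m, ⟨hpos, hone⟩, hinv⟩ := main
  exact ⟨m, hpos, hone, fun x f g h => hinv x f g h⟩
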